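/- arXiv:1804.00020 — 5 statements merged into one kernel-verified Lean document; each statement's English description precedes it below -/
import Mathlib

section
/- For each integer n ≥ 2, one has (1 − n(n−1)/2)·B_n/n! = Σ_{i=2}^{n−2} (i−1)·(B_i/i!)·(B_{n−i}/(n−i)!), where the sum is over integers i with 2 ≤ i ≤ n−2 (and is empty for n = 2, 3). -/
open PowerSeries Finset

private lemma exp_deriv : d⁄dX ℚ (exp ℚ) = exp ℚ := by
  ext n
  rw [coeff_derivative]
  simp only [coeff_exp, Algebra.algebraMap_self, RingHom.id_apply]
  rw [Nat.factorial_succ]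
  have h : (n.factorial : ℚ) ≠ 0 := by exact_mod_cast n.factorial_ne_zero
  push_cast
  field_simp

private lemma coeff_bps (n : ℕ) :
    coeff n (bernoulliPowerSeries ℚ) = bernoulli n / n.factorial := by
  simp [bernoulliPowerSeries, coeff_mk, Algebra.algebraMap_self]

private lemma hB2 : (bernoulliPowerSeries ℚ) ^ 2 =
    bernoulliPowerSeries ℚ - X * bernoulliPowerSeries ℚ -
      X * (d⁄dX ℚ (bernoulliPowerSeries ℚ)) := by
  set B := bernoulliPowerSeries ℚ with hBdef
  have h0 : B * (exp ℚ - 1) = X := bernoulliPowerSeries_mul_exp_sub_one ℚ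
  have h1 : d⁄dX ℚ B * (exp ℚ - 1) + B * exp ℚ = 1 := by
    have h := congrArg (d⁄dX ℚ) h0
    rw [Derivation.leibniz, derivative_X, map_sub, exp_deriv,
      Derivation.map_one_eq_zero, sub_zero, smul_eq_mul, smul_eq_mul] at h
    linear_combination h
  have h2 : d⁄dX ℚ B * X + B * (B * exp ℚ) = B := by
    calc d⁄dX ℚ B * X + B * (B * exp ℚ)
        = (d⁄dX ℚ B * (exp ℚ - 1) + B * exp ℚ) * B := by rw [← h0]; ring
      _ = B := by rw [h1, one_mul]
  have h3 : B * exp ℚ = X + B := by rw [← h0]; ring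
  rw [h3] at h2
  linear_combination h2

private lemma key (m : ℕ) :
    ∑ i ∈ Finset.range (m + 2),
        (bernoulli i / i.factorial : ℚ) * (bernoulli (m + 1 - i) / (m + 1 - i).factorial) =
      bernoulli (m + 1) / (m + 1).factorial - bernoulli m / m.factorial -
        (bernoulli (m + 1) / (m + 1).factorial) * (m + 1) := by
  have h := congrArg (coeff (R := ℚ) (m + 1)) hB2
  rw [sq, coeff_mul, Finset.Nat.sum_antidiagonal_eq_sum_range_succ_mk] at h
  simp only [map_sub, coeff_succ_X_mul, coeff_derivative, coeff_bps] at h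
  convert h using 2

/-- For each integer `n ≥ 2` one has
`(1 − n(n−1)/2)·Bₙ/n! = Σ_{i=2}^{n−2} (i−1)·(Bᵢ/i!)·(B_{n−i}/(n−i)!)`,
where `Bₙ` denotes the Bernoulli numbers defined by `x/(eˣ−1) = Σ_{n≥0} Bₙ xⁿ/n!`
(Mathlib's `bernoulli`), and the sum ranges over integers `i` with `2 ≤ i ≤ n−2`
(so it is empty for `n = 2, 3`). -/
theorem bernoulli_constant_term_identity (n : ℕ) (hn : 2 ≤ n) :
    (1 - (n : ℚ) * ((n : ℚ) - 1) / 2) * bernoulli n / (n.factorial : ℚ) =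
      ∑ i ∈ Finset.Icc 2 (n - 2),
        ((i : ℚ) - 1) * (bernoulli i / (i.factorial : ℚ)) *
          (bernoulli (n - i) / ((n - i).factorial : ℚ)) := by
  match n, hn with
  | 2, _ => norm_num
  | 3, _ =>
      have h3 : bernoulli 3 = 0 := by
        rw [bernoulli_eq_bernoulli'_of_ne_one (by norm_num), bernoulli'_three]
      norm_num [h3]
  | (m + 4), _ => ?_
  set c : ℕ → ℚ := fun i => bernoulli i / i.factorial with hc
  have hn2 : m + 4 - 2 = m + 2 := by omega
  rw [hn2]
  -- T : the plain convolution over Icc 2 (m+2)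
  have hT : ∑ i ∈ Finset.Icc 2 (m + 2), c i * c (m + 4 - i) = -(m + 5) * c (m + 4) := by
    have hk := key (m + 3)
    have hsplit : ∑ i ∈ Finset.range (m + 5), c i * c (m + 4 - i) =
        c 0 * c (m + 4) + c 1 * c (m + 3) +
          (∑ i ∈ Finset.Icc 2 (m + 2), c i * c (m + 4 - i)) +
          c (m + 3) * c 1 + c (m + 4) * c 0 := by
      rw [Finset.sum_range_succ, Finset.sum_range_succ]
      have : Finset.range (m + 3) = Finset.Icc 0 (m + 2) := by
        rw [← Finset.Ico_add_one_right_eq_Icc, Finset.range_eq_Ico]; rfl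
      rw [this]
      rw [← Finset.sum_Ioc_add_eq_sum_Icc (by omega : (0:ℕ) ≤ m+2),
        ← Finset.sum_Ioc_consecutive _ (by omega : (0:ℕ) ≤ 1) (by omega : 1 ≤ m+2)]
      have e1 : Finset.Ioc 1 (m + 2) = Finset.Icc 2 (m + 2) := by
        ext x; simp; omega
      have e2 : Finset.Ioc 0 1 = ({1} : Finset ℕ) := rfl
      rw [e1, e2]
      simp only [Finset.sum_singleton]
      have g1 : m + 4 - 0 = m + 4 := by omega
      have g2 : m + 4 - 1 = m + 3 := by omega
      have g3 : m + 4 - (m + 3) = 1 := by omega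
      have g4 : m + 4 - (m + 4) = 0 := by omega
      rw [g1, g2, g3, g4]
      ring
    have hc0 : c 0 = 1 := by simp [hc]
    have hc1 : c 1 = -1/2 := by norm_num [hc, bernoulli_one]
    rw [hsplit, hc0, hc1] at hk
    have : (m + 3 + 1 : ℕ) = m + 4 := by omega
    rw [this] at hk
    push_cast at hk ⊢
    linarith
  -- symmetry
  have hsym : ∑ i ∈ Finset.Icc 2 (m + 2), ((i : ℚ) - 1) * c i * c (m + 4 - i) =
      ∑ i ∈ Finset.Icc 2 (m + 2), ((m : ℚ) + 3 - i) * c i * c (m + 4 - i) := by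
    have hIcc : Finset.Icc 2 (m + 2) = Finset.Ico 2 (m + 3) := by
      ext x; simp; omega
    rw [hIcc, Finset.sum_Ico_eq_sum_range, Finset.sum_Ico_eq_sum_range]
    have hlen : m + 3 - 2 = m + 1 := by omega
    rw [hlen, ← Finset.sum_range_reflect]
    refine Finset.sum_congr rfl fun j hj => ?_
    simp only [Finset.mem_range] at hj
    have hjm : j ≤ m := by omega
    have e1 : 2 + (m + 1 - 1 - j) = m + 2 - j := by omega
    have e2 : m + 4 - (m + 2 - j) = 2 + j := by omega
    have e3 : m + 4 - (2 + j) = m + 2 - j := by omega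
    rw [e1, e2, e3]
    have e4 : ((m + 2 - j : ℕ) : ℚ) = (m : ℚ) + 2 - (j : ℚ) := by
      rw [Nat.cast_sub (by omega)]; push_cast; ring
    rw [e4]
    push_cast
    ring
  have hgoal : (2 : ℚ) * ∑ i ∈ Finset.Icc 2 (m + 2), ((i : ℚ) - 1) * c i * c (m + 4 - i) =
      ((m : ℚ) + 2) * ∑ i ∈ Finset.Icc 2 (m + 2), c i * c (m + 4 - i) := by
    rw [two_mul]
    nth_rewrite 2 [hsym]
    rw [← Finset.sum_add_distrib, Finset.mul_sum]
    refine Finset.sum_congr rfl fun i _ => ?_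
    ring
  rw [hT] at hgoal
  have hfinal : ∑ i ∈ Finset.Icc 2 (m + 2), ((i : ℚ) - 1) * c i * c (m + 4 - i) =
      (1 - ((m : ℚ) + 4) * (((m : ℚ) + 4) - 1) / 2) * bernoulli (m + 4) /
        ((m + 4).factorial : ℚ) := by
    have hcm : c (m + 4) = bernoulli (m + 4) / ((m + 4).factorial : ℚ) := rfl
    rw [hcm] at hgoal
    field_simp at hgoal ⊢
    linarith
  push_cast at hfinal ⊢
  rw [← hfinal]
end

section
/- For every integer j ≥ 0, both f_c·∂^{(j)}g_c and g_c·∂^{(j)}g_c lie in the ℂ-linear span of {∂^{(k)}g_c : k ∈ ℤ, k ≥ 0} inside the field of formal Laurent series ℂ((z)). -/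
noncomputable section

/-- The formal derivative `∂_z` of a formal Laurent series. -/
def lderiv (f : LaurentSeries ℂ) : LaurentSeries ℂ where
  coeff n := ((n + 1 : ℤ) : ℂ) * f.coeff (n + 1)
  isPWO_support' := by
    have h : (Function.support fun n : ℤ => ((n + 1 : ℤ) : ℂ) * f.coeff (n + 1))
        ⊆ (fun n : ℤ => n - 1) '' f.support := by
      intro n hn
      refine ⟨n + 1, ?_, by ring⟩
      intro h0
      simp [HahnSeries.support] at hn
      exact hn.2 h0
    exact (f.isPWO_support.image_of_monotone
      (fun a b hab => by exact sub_le_sub_right hab 1)).mono h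

/-- The substitution `z ↦ -z` on formal Laurent series, i.e. `f(z) ↦ f(-z)`:
the coefficient of `zⁿ` is multiplied by `(-1)ⁿ`. -/
def negSub (f : LaurentSeries ℂ) : LaurentSeries ℂ where
  coeff n := ((-1 : ℂ) ^ n) * f.coeff n
  isPWO_support' := by
    apply f.isPWO_support.mono
    intro n hn h0
    exact hn (by simp [h0])

/-- The divided power derivative `∂^{(k)} = (1/k!)·∂_z^k` on formal Laurent series. -/
def dpow (k : ℕ) (f : LaurentSeries ℂ) : LaurentSeries ℂ :=
  ((k.factorial : ℂ))⁻¹ • lderiv^[k] f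

/-- The formal Laurent series `f_c(z) = Σ_{n≥0} (−1)ⁿ·Bₙ·cⁿ·z^{n−1}/n!`, the Laurent
expansion at `z = 0` of `c·e^{cz}/(e^{cz}−1)`; here `Bₙ` are the Bernoulli numbers,
defined by `x/(eˣ−1) = Σ_{n≥0} Bₙ xⁿ/n!`. -/
def fc (c : ℂ) : LaurentSeries ℂ :=
  (HahnSeries.single (-1 : ℤ) (1 : ℂ)) *
    (PowerSeries.mk fun n => (-1) ^ n * (bernoulli n : ℂ) * c ^ n / (n.factorial : ℂ) :
      PowerSeries ℂ)

/-- `g_c = ∂_z f_c`. -/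
def gc (c : ℂ) : LaurentSeries ℂ := lderiv (fc c)

namespace FcAux

open PowerSeries HahnSeries

lemma lderiv_coeff (f : LaurentSeries ℂ) (n : ℤ) :
    (lderiv f).coeff n = ((n + 1 : ℤ) : ℂ) * f.coeff (n + 1) := rfl

lemma lderiv_add (f g : LaurentSeries ℂ) : lderiv (f + g) = lderiv f + lderiv g := by
  ext n; simp [lderiv_coeff, HahnSeries.coeff_add]; ring

lemma lderiv_smul (r : ℂ) (f : LaurentSeries ℂ) : lderiv (r • f) = r • lderiv f := by
  ext n; simp [lderiv_coeff, HahnSeries.coeff_smul]; ring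

lemma lderiv_sub (f g : LaurentSeries ℂ) : lderiv (f - g) = lderiv f - lderiv g := by
  ext n; simp [lderiv_coeff, HahnSeries.coeff_sub]; ring

lemma ofP_coeff (p : PowerSeries ℂ) (m : ℤ) :
    ((p : LaurentSeries ℂ)).coeff m = if 0 ≤ m then PowerSeries.coeff m.toNat p else 0 := by
  by_cases h : 0 ≤ m
  · rw [if_pos h]
    obtain ⟨k, rfl⟩ := Int.eq_ofNat_of_zero_le h
    simp
  · rw [if_neg h]
    rw [HahnSeries.ofPowerSeries_apply]
    apply HahnSeries.embDomain_notin_range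
    rintro ⟨k, hk⟩
    exact h (hk ▸ Int.natCast_nonneg k)

/-- `sm a p` is `z^a·p(z)`. -/
def sm (a : ℤ) (p : PowerSeries ℂ) : LaurentSeries ℂ :=
  (HahnSeries.single a 1) * (HahnSeries.ofPowerSeries ℤ ℂ p)

lemma sm_coeff (a : ℤ) (p : PowerSeries ℂ) (n : ℤ) :
    (sm a p).coeff n = if 0 ≤ n - a then PowerSeries.coeff (n - a).toNat p else 0 := by
  have h := HahnSeries.coeff_single_mul_add (r := (1:ℂ)) (x := (p : LaurentSeries ℂ))
    (a := n - a) (b := a)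
  rw [sub_add_cancel] at h
  rw [sm, h, one_mul, ofP_coeff]

lemma sm_add (a : ℤ) (p q : PowerSeries ℂ) : sm a (p + q) = sm a p + sm a q := by
  rw [sm, map_add, mul_add]; rfl

lemma sm_sub (a : ℤ) (p q : PowerSeries ℂ) : sm a (p - q) = sm a p - sm a q := by
  rw [sm, map_sub, mul_sub]; rfl

lemma sm_smul (a : ℤ) (r : ℂ) (p : PowerSeries ℂ) : sm a (r • p) = r • sm a p := by
  rw [sm, PowerSeries.smul_eq_C_mul, map_mul, HahnSeries.ofPowerSeries_C, sm]
  ext n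
  rw [HahnSeries.coeff_smul]
  rw [show HahnSeries.C r = HahnSeries.single (0:ℤ) r from rfl]
  rw [mul_comm ((HahnSeries.single (0:ℤ)) r), ← mul_assoc]
  rw [← add_zero n, HahnSeries.coeff_mul_single_add, smul_eq_mul]
  ring

lemma sm_mul (a b : ℤ) (p q : PowerSeries ℂ) : sm a p * sm b q = sm (a + b) (p * q) := by
  rw [sm, sm, sm, map_mul]
  rw [show (HahnSeries.single a (1:ℂ)) * ↑p * ((HahnSeries.single b 1) * ↑q)
      = ((HahnSeries.single a 1) * (HahnSeries.single b 1)) * (↑p * ↑q) from by ring]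
  rw [HahnSeries.single_mul_single, one_mul]

lemma sm_succ (a : ℤ) (p : PowerSeries ℂ) : sm (a + 1) p = sm a (X * p) := by
  rw [sm, sm, map_mul, HahnSeries.ofPowerSeries_X,
    show (HahnSeries.single (a+1) (1:ℂ)) = HahnSeries.single a 1 * HahnSeries.single 1 1 from by
      rw [HahnSeries.single_mul_single, one_mul]]
  ring

lemma coeff_X_mul_deriv (p : PowerSeries ℂ) (k : ℕ) :
    PowerSeries.coeff k (X * d⁄dX ℂ p) = (k : ℂ) * PowerSeries.coeff k p := by
  cases k with
  | zero => simp
  | succ k =>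
    rw [PowerSeries.coeff_succ_X_mul, PowerSeries.coeff_derivative]
    push_cast; ring

lemma lderiv_sm (a : ℤ) (p : PowerSeries ℂ) :
    lderiv (sm a p) = sm (a - 1) ((a : ℂ) • p + X * d⁄dX ℂ p) := by
  ext n
  rw [lderiv_coeff, sm_coeff, sm_coeff]
  have harg : n - (a - 1) = n + 1 - a := by ring
  rw [harg]
  by_cases h : 0 ≤ n + 1 - a
  · rw [if_pos h, if_pos h, map_add, coeff_X_mul_deriv, PowerSeries.coeff_smul]
    have : ((n + 1 - a).toNat : ℂ) = ((n:ℂ) + 1 - (a:ℂ)) := by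
      exact_mod_cast congrArg (Int.cast : ℤ → ℂ) (Int.toNat_of_nonneg h)
    rw [this, smul_eq_mul]; push_cast; ring
  · rw [if_neg h, if_neg h, mul_zero]

variable (c : ℂ)

def Ec : PowerSeries ℂ := rescale c (PowerSeries.exp ℂ)
def Ac : PowerSeries ℂ := PowerSeries.mk fun n => c ^ (n+1) / ((n+1).factorial : ℂ)

lemma coeff_Ec (n : ℕ) : PowerSeries.coeff n (Ec c) = c ^ n / (n.factorial : ℂ) := by
  rw [Ec, coeff_rescale, PowerSeries.coeff_exp]
  rw [eq_ratCast (algebraMap ℚ ℂ)]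
  push_cast
  ring

lemma hEA : Ec c = 1 + X * Ac c := by
  ext n
  cases n with
  | zero => simp [coeff_Ec]
  | succ n =>
    rw [map_add, PowerSeries.coeff_succ_X_mul, coeff_Ec, Ac, PowerSeries.coeff_mk,
      PowerSeries.coeff_one, if_neg (Nat.succ_ne_zero n)]
    ring

lemma hA0 : PowerSeries.constantCoeff (Ac c) = c := by
  simp [Ac, coeff_zero_eq_constantCoeff_apply]

lemma hdE : d⁄dX ℂ (Ec c) = c • Ec c := by
  ext n
  rw [PowerSeries.coeff_derivative, PowerSeries.coeff_smul, coeff_Ec, coeff_Ec]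
  have h2 : (n.factorial : ℂ) ≠ 0 := Nat.cast_ne_zero.mpr n.factorial_ne_zero
  have h3 : ((n : ℂ) + 1) ≠ 0 := by exact Nat.cast_add_one_ne_zero n
  have h4 : ((n+1).factorial : ℂ) = ((n:ℂ)+1) * (n.factorial : ℂ) := by
    rw [Nat.factorial_succ]; push_cast; ring
  rw [h4, smul_eq_mul]
  field_simp
  ring

lemma hXdA : Ac c + X * d⁄dX ℂ (Ac c) = c • Ec c := by
  have h := congrArg (d⁄dX ℂ) (hEA c)
  rw [hdE, map_add, Derivation.leibniz, PowerSeries.derivative_X, Derivation.map_one_eq_zero,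
    smul_eq_mul, smul_eq_mul, mul_one] at h
  rw [h]; ring

lemma hAne (hc : c ≠ 0) : Ac c ≠ 0 := by
  intro h
  have := hA0 c
  rw [h] at this
  exact hc (by simpa using this.symm)

lemma hdAinv (hc : c ≠ 0) : d⁄dX ℂ ((Ac c)⁻¹) * (Ac c) ^ 2 = - d⁄dX ℂ (Ac c) := by
  have h := congrArg (d⁄dX ℂ)
    (PowerSeries.mul_inv_cancel (Ac c) (by rw [hA0]; exact hc))
  rw [Derivation.leibniz, Derivation.map_one_eq_zero, smul_eq_mul, smul_eq_mul] at h
  have hmul : ((Ac c)⁻¹ * Ac c) = 1 := PowerSeries.inv_mul_cancel _ (by rw [hA0]; exact hc)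
  calc d⁄dX ℂ ((Ac c)⁻¹) * (Ac c) ^ 2
      = (Ac c * d⁄dX ℂ ((Ac c)⁻¹) + (Ac c)⁻¹ * d⁄dX ℂ (Ac c)) * Ac c
        - ((Ac c)⁻¹ * Ac c) * d⁄dX ℂ (Ac c) := by ring
  _ = - d⁄dX ℂ (Ac c) := by rw [h, hmul]; ring

lemma hD (hc : c ≠ 0) (m : ℕ) : d⁄dX ℂ (Ec c * ((Ac c)⁻¹) ^ m) * (Ac c) ^ (m + 1)
    = d⁄dX ℂ (Ec c) * Ac c - (m : ℂ) • (Ec c * d⁄dX ℂ (Ac c)) := by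
  induction m with
  | zero => simp
  | succ m ih =>
    have key : d⁄dX ℂ (Ec c * ((Ac c)⁻¹) ^ (m+1))
        = d⁄dX ℂ (Ec c * ((Ac c)⁻¹) ^ m) * (Ac c)⁻¹
          + (Ec c * ((Ac c)⁻¹) ^ m) * d⁄dX ℂ ((Ac c)⁻¹) := by
      rw [show Ec c * ((Ac c)⁻¹) ^ (m+1) = (Ec c * ((Ac c)⁻¹) ^ m) * (Ac c)⁻¹ from by ring,
        Derivation.leibniz, smul_eq_mul, smul_eq_mul]
      ring
    have hmul : ((Ac c)⁻¹ * Ac c) = 1 := PowerSeries.inv_mul_cancel _ (by rw [hA0]; exact hc)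
    calc d⁄dX ℂ (Ec c * ((Ac c)⁻¹) ^ (m+1)) * (Ac c) ^ (m + 2)
        = (d⁄dX ℂ (Ec c * ((Ac c)⁻¹) ^ m) * (Ac c) ^ (m+1)) * ((Ac c)⁻¹ * Ac c)
          + (Ec c * (d⁄dX ℂ ((Ac c)⁻¹) * (Ac c)^2)) * (((Ac c)⁻¹ * Ac c)) ^ m := by
          rw [key]; ring
      _ = d⁄dX ℂ (Ec c) * Ac c - ((m:ℂ) + 1) • (Ec c * d⁄dX ℂ (Ac c)) := by
          rw [hmul, ih, hdAinv c hc, mul_one, one_pow, mul_one, add_smul, one_smul]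
          ring
      _ = d⁄dX ℂ (Ec c) * Ac c - (((m+1 : ℕ)) : ℂ) • (Ec c * d⁄dX ℂ (Ac c)) := by
          push_cast; ring_nf

lemma hGps (hc : c ≠ 0) (m : ℕ) :
    ((-(m:ℤ) : ℤ) : ℂ) • (Ec c * ((Ac c)⁻¹) ^ m)
      + X * d⁄dX ℂ (Ec c * ((Ac c)⁻¹) ^ m)
    = (c * (1 - (m:ℂ))) • (X * (Ec c * ((Ac c)⁻¹) ^ m))
      - (c * (m:ℂ)) • (Ec c * ((Ac c)⁻¹) ^ (m+1)) := by
  have hAmne : (Ac c) ^ (m+1) ≠ 0 := pow_ne_zero _ (hAne c hc)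
  apply mul_right_cancel₀ hAmne
  have hmul : ((Ac c)⁻¹ * Ac c) = 1 := PowerSeries.inv_mul_cancel _ (by rw [hA0]; exact hc)
  have h1 := hD c hc m
  have h2 := hdE c
  have h3 := hXdA c
  have h4 := hEA c
  have h5 : (Ec c * ((Ac c)⁻¹) ^ m) * (Ac c) ^ (m+1) = Ec c * Ac c := by
    calc (Ec c * ((Ac c)⁻¹) ^ m) * (Ac c) ^ (m+1)
        = (Ec c * Ac c) * ((Ac c)⁻¹ * Ac c) ^ m := by ring
      _ = Ec c * Ac c := by rw [hmul, one_pow, mul_one]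
  have h6 : (Ec c * ((Ac c)⁻¹) ^ (m+1)) * (Ac c) ^ (m+1) = Ec c := by
    calc (Ec c * ((Ac c)⁻¹) ^ (m+1)) * (Ac c) ^ (m+1)
        = Ec c * ((Ac c)⁻¹ * Ac c) ^ (m+1) := by ring
      _ = Ec c := by rw [hmul, one_pow, mul_one]
  simp only [PowerSeries.smul_eq_C_mul, smul_eq_mul] at h1 h2 h3 ⊢
  push_cast
  simp only [map_mul, map_sub, map_one, map_neg]
  linear_combination (X : PowerSeries ℂ) * h1 + (X * Ac c) * h2
    - (PowerSeries.C (m:ℂ) * Ec c) * h3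
    - (PowerSeries.C c * PowerSeries.C (m:ℂ) * Ec c) * h4
    + (- PowerSeries.C (m:ℂ) - PowerSeries.C c * (1 - PowerSeries.C (m:ℂ)) * X) * h5
    + (PowerSeries.C c * PowerSeries.C (m:ℂ)) * h6

def Fc : PowerSeries ℂ :=
  PowerSeries.mk fun n => (-1) ^ n * (bernoulli n : ℂ) * c ^ n / (n.factorial : ℂ)

lemma hFres : Fc c = rescale c (bernoulli'PowerSeries ℂ) := by
  ext n
  rw [Fc, PowerSeries.coeff_mk, coeff_rescale, bernoulli'PowerSeries, PowerSeries.coeff_mk,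
    bernoulli, eq_ratCast (algebraMap ℚ ℂ)]
  push_cast
  rw [← mul_assoc, ← mul_pow]
  norm_num
  ring

lemma hFA (hc : c ≠ 0) : Fc c = c • (Ec c * (Ac c)⁻¹) := by
  have key : Fc c * (X * Ac c) = (PowerSeries.C c * X) * Ec c := by
    have h1 : Fc c * (X * Ac c) = rescale c (bernoulli'PowerSeries ℂ * (PowerSeries.exp ℂ - 1)) := by
      rw [map_mul, ← hFres]
      congr 1
      rw [map_sub, map_one, ← Ec, hEA c]
      ring
    rw [h1, bernoulli'PowerSeries_mul_exp_sub_one, map_mul, rescale_X, Ec]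
  have key2 : Fc c * Ac c = PowerSeries.C c * Ec c := by
    apply mul_left_cancel₀ (PowerSeries.X_ne_zero : (X : PowerSeries ℂ) ≠ 0)
    calc X * (Fc c * Ac c) = Fc c * (X * Ac c) := by ring
      _ = X * (PowerSeries.C c * Ec c) := by rw [key]; ring
  apply mul_right_cancel₀ (hAne c hc)
  rw [key2, PowerSeries.smul_eq_C_mul]
  have hmul : ((Ac c)⁻¹ * Ac c) = 1 := PowerSeries.inv_mul_cancel _ (by rw [hA0]; exact hc)
  calc PowerSeries.C c * Ec c = PowerSeries.C c * Ec c * ((Ac c)⁻¹ * Ac c) := by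
        rw [hmul, mul_one]
    _ = PowerSeries.C c * (Ec c * (Ac c)⁻¹) * Ac c := by ring

/-- The basis elements `b m = u/(u-1)^m` with `u = e^{cz}`. -/
def bb (m : ℕ) : LaurentSeries ℂ := sm (-(m:ℤ)) (Ec c * ((Ac c)⁻¹) ^ m)

lemma b_mul (hc : c ≠ 0) (a b : ℕ) :
    bb c (a+1) * bb c (b+1) = bb c (a+b+1) + bb c (a+b+2) := by
  have hmul : ((Ac c)⁻¹ * Ac c) = 1 := PowerSeries.inv_mul_cancel _ (by rw [hA0]; exact hc)
  rw [bb, bb, sm_mul, bb, bb]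
  rw [show (-((a+1:ℕ):ℤ)) + (-((b+1:ℕ):ℤ)) = -((a+b+2:ℕ):ℤ) from by push_cast; ring]
  rw [show (-((a+b+1:ℕ):ℤ)) = -((a+b+2:ℕ):ℤ) + 1 from by push_cast; ring]
  rw [sm_succ, ← sm_add]
  congr 1
  have hE2 : (Ec c * ((Ac c)⁻¹) ^ (a+1)) * (Ec c * ((Ac c)⁻¹) ^ (b+1))
      = X * (Ec c * ((Ac c)⁻¹) ^ (a+b+1)) + Ec c * ((Ac c)⁻¹) ^ (a+b+2) := by
    have hAmne : (Ac c) ^ (a+b+2) ≠ 0 := pow_ne_zero _ (hAne c hc)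
    apply mul_right_cancel₀ hAmne
    have e1 : ((Ec c * ((Ac c)⁻¹) ^ (a+1)) * (Ec c * ((Ac c)⁻¹) ^ (b+1))) * (Ac c) ^ (a+b+2)
        = Ec c * Ec c * ((Ac c)⁻¹ * Ac c) ^ (a+b+2) := by ring
    have e2 : (X * (Ec c * ((Ac c)⁻¹) ^ (a+b+1)) + Ec c * ((Ac c)⁻¹) ^ (a+b+2)) * (Ac c) ^ (a+b+2)
        = X * Ec c * Ac c * ((Ac c)⁻¹ * Ac c) ^ (a+b+1)
          + Ec c * ((Ac c)⁻¹ * Ac c) ^ (a+b+2) := by ring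
    rw [e1, e2, hmul, one_pow, one_pow]
    simp only [mul_one]
    rw [hEA c]
    ring
  rw [hE2]

lemma b_deriv (hc : c ≠ 0) (m : ℕ) :
    lderiv (bb c m) = (c * (1 - (m:ℂ))) • bb c m - (c * (m:ℂ)) • bb c (m+1) := by
  conv_lhs => rw [bb, lderiv_sm]
  rw [show bb c m = sm (-(m:ℤ) - 1) (X * (Ec c * ((Ac c)⁻¹) ^ m)) from by
      rw [← sm_succ, show (-(m:ℤ) - 1 + 1) = -(m:ℤ) from by ring]; rfl]
  rw [show bb c (m+1) = sm (-(m:ℤ) - 1) (Ec c * ((Ac c)⁻¹) ^ (m+1)) from by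
      rw [bb, show (-((m+1:ℕ):ℤ)) = -(m:ℤ) - 1 from by push_cast; ring]]
  rw [← sm_smul, ← sm_smul, ← sm_sub]
  exact congrArg (sm (-(m:ℤ) - 1)) (hGps c hc m)

lemma smul_mul (r : ℂ) (x y : LaurentSeries ℂ) : (r • x) * y = r • (x * y) := by
  rw [← HahnSeries.C_mul_eq_smul, ← HahnSeries.C_mul_eq_smul, mul_assoc]

lemma mul_smul (r : ℂ) (x y : LaurentSeries ℂ) : x * (r • y) = r • (x * y) := by
  rw [← HahnSeries.C_mul_eq_smul, ← HahnSeries.C_mul_eq_smul, mul_left_comm]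

lemma lderiv_zero : lderiv 0 = 0 := by
  ext n; simp [lderiv_coeff]

lemma fc_eq (hc : c ≠ 0) : fc c = c • bb c 1 := by
  have h0 : fc c = sm (-1) (Fc c) := rfl
  rw [h0, hFA c hc, sm_smul, bb]
  norm_num

lemma gc_eq (hc : c ≠ 0) : gc c = (-(c * c)) • bb c 2 := by
  rw [gc, fc_eq c hc, lderiv_smul, b_deriv c hc 1]
  norm_num
  module

lemma b_mul1 (hc : c ≠ 0) (m : ℕ) :
    bb c 1 * bb c (m+2) = bb c (m+2) + bb c (m+3) := by
  have h := b_mul c hc 0 (m+1)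
  rw [show 0+1 = 1 from by omega, show (m+1)+1 = m+2 from by omega,
    show 0+(m+1)+1 = m+2 from by omega, show 0+(m+1)+2 = m+3 from by omega] at h
  exact h

lemma b_mul2 (hc : c ≠ 0) (m : ℕ) :
    bb c 2 * bb c (m+2) = bb c (m+3) + bb c (m+4) := by
  have h := b_mul c hc 1 (m+1)
  rw [show 1+1 = 2 from by omega, show (m+1)+1 = m+2 from by omega,
    show 1+(m+1)+1 = m+3 from by omega, show 1+(m+1)+2 = m+4 from by omega] at h
  exact h

lemma lderiv_span (hc : c ≠ 0) (k : ℕ) {x : LaurentSeries ℂ}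
    (hx : x ∈ Submodule.span ℂ (bb c '' Set.Ico 2 (k+2))) :
    lderiv x ∈ Submodule.span ℂ (bb c '' Set.Ico 2 (k+3)) := by
  induction hx using Submodule.span_induction with
  | mem y hy =>
    obtain ⟨i, hi, rfl⟩ := hy
    have h1 : 2 ≤ i := hi.1
    have h2 : i < k + 2 := hi.2
    rw [b_deriv c hc i]
    exact sub_mem (Submodule.smul_mem _ _ (Submodule.subset_span ⟨i, ⟨h1, by omega⟩, rfl⟩))
      (Submodule.smul_mem _ _ (Submodule.subset_span ⟨i+1, ⟨by omega, by omega⟩, rfl⟩))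
  | zero => rw [lderiv_zero]; exact Submodule.zero_mem _
  | add a b ha hb iha ihb => rw [lderiv_add]; exact Submodule.add_mem _ iha ihb
  | smul r a ha iha => rw [lderiv_smul]; exact Submodule.smul_mem _ _ iha

lemma struct (hc : c ≠ 0) (k : ℕ) : ∃ r : ℂ, r ≠ 0 ∧
    lderiv^[k] (gc c) - r • bb c (k+2) ∈ Submodule.span ℂ (bb c '' Set.Ico 2 (k+2)) := by
  induction k with
  | zero =>
    refine ⟨-(c * c), by simpa using mul_ne_zero hc hc, ?_⟩
    rw [Function.iterate_zero_apply, gc_eq c hc, sub_self]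
    exact Submodule.zero_mem _
  | succ k ih =>
    obtain ⟨r, hr, hw⟩ := ih
    have hK : ((k+2:ℕ):ℂ) ≠ 0 := Nat.cast_ne_zero.mpr (by omega)
    refine ⟨r * (-(c * ((k+2:ℕ):ℂ))), mul_ne_zero hr (by simpa using mul_ne_zero hc hK), ?_⟩
    have e1 : lderiv (lderiv^[k] (gc c))
        = lderiv (lderiv^[k] (gc c) - r • bb c (k+2)) + r • lderiv (bb c (k+2)) := by
      rw [lderiv_sub, lderiv_smul]; abel
    have e3 : lderiv^[k+1] (gc c) - (r * (-(c * ((k+2:ℕ):ℂ)))) • bb c (k+3)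
        = lderiv (lderiv^[k] (gc c) - r • bb c (k+2))
          + (r * (c * (1 - ((k+2:ℕ):ℂ)))) • bb c (k+2) := by
      rw [Function.iterate_succ_apply', e1, b_deriv c hc (k+2)]
      rw [show (k+2)+1 = k+3 from by omega]
      module
    rw [show k+1+2 = k+3 from by omega, e3]
    exact Submodule.add_mem _ (lderiv_span c hc k hw)
      (Submodule.smul_mem _ _ (Submodule.subset_span ⟨k+2, ⟨by omega, by omega⟩, rfl⟩))

lemma bb_memV (hc : c ≠ 0) (k : ℕ) :
    bb c (k+2) ∈ Submodule.span ℂ (Set.range fun k : ℕ => dpow k (gc c)) := by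
  induction k using Nat.strong_induction_on with
  | _ k IH =>
  obtain ⟨r, hr, hw⟩ := struct c hc k
  have hx : lderiv^[k] (gc c) ∈ Submodule.span ℂ (Set.range fun k : ℕ => dpow k (gc c)) := by
    have hfac : lderiv^[k] (gc c) = (k.factorial : ℂ) • dpow k (gc c) := by
      rw [dpow, smul_smul, mul_inv_cancel₀ (Nat.cast_ne_zero.mpr k.factorial_ne_zero), one_smul]
    rw [hfac]
    exact Submodule.smul_mem _ _ (Submodule.subset_span ⟨k, rfl⟩)
  have hwV : lderiv^[k] (gc c) - r • bb c (k+2)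
      ∈ Submodule.span ℂ (Set.range fun k : ℕ => dpow k (gc c)) := by
    refine Submodule.span_le.mpr ?_ hw
    rintro y ⟨i, ⟨hi2, hik⟩, rfl⟩
    obtain ⟨i', rfl⟩ : ∃ i', i = i'+2 := ⟨i-2, by omega⟩
    exact IH i' (by omega)
  have heq : bb c (k+2)
      = r⁻¹ • (lderiv^[k] (gc c) - (lderiv^[k] (gc c) - r • bb c (k+2))) := by
    rw [sub_sub_cancel, inv_smul_smul₀ hr]
  rw [heq]
  exact Submodule.smul_mem _ _ (Submodule.sub_mem _ hx hwV)

lemma dpow_memU (hc : c ≠ 0) (j : ℕ) :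
    dpow j (gc c) ∈ Submodule.span ℂ (Set.range fun k : ℕ => bb c (k+2)) := by
  obtain ⟨r, hr, hw⟩ := struct c hc j
  have h1 : lderiv^[j] (gc c) ∈ Submodule.span ℂ (Set.range fun k : ℕ => bb c (k+2)) := by
    have e : lderiv^[j] (gc c)
        = (lderiv^[j] (gc c) - r • bb c (j+2)) + r • bb c (j+2) := by abel
    rw [e]
    refine Submodule.add_mem _ (Submodule.span_le.mpr ?_ hw)
      (Submodule.smul_mem _ _ (Submodule.subset_span ⟨j, rfl⟩))
    rintro y ⟨i, ⟨hi2, hik⟩, rfl⟩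
    obtain ⟨i', rfl⟩ : ∃ i', i = i'+2 := ⟨i-2, by omega⟩
    exact Submodule.subset_span ⟨i', rfl⟩
  rw [dpow]
  exact Submodule.smul_mem _ _ h1

end FcAux

/-- For `c ≠ 0` and every `j ≥ 0`, both `f_c·∂^{(j)}g_c` and `g_c·∂^{(j)}g_c` lie in the
ℂ-linear span of `{∂^{(k)}g_c : k ≥ 0}` inside `ℂ((z))`. -/
theorem fc_gc_span_closure (c : ℂ) (hc : c ≠ 0) (j : ℕ) :
    fc c * dpow j (gc c) ∈ Submodule.span ℂ (Set.range fun k : ℕ => dpow k (gc c)) ∧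
    gc c * dpow j (gc c) ∈ Submodule.span ℂ (Set.range fun k : ℕ => dpow k (gc c)) := by
  have main : ∀ x ∈ Submodule.span ℂ (Set.range fun k : ℕ => FcAux.bb c (k+2)),
      fc c * x ∈ Submodule.span ℂ (Set.range fun k : ℕ => dpow k (gc c)) ∧
      gc c * x ∈ Submodule.span ℂ (Set.range fun k : ℕ => dpow k (gc c)) := by
    intro x hx
    induction hx using Submodule.span_induction with
    | mem y hy =>
      obtain ⟨k, rfl⟩ := hy
      have hp1 : fc c * FcAux.bb c (k+2)
          = c • (FcAux.bb c (k+2) + FcAux.bb c (k+3)) := by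
        rw [FcAux.fc_eq c hc, FcAux.smul_mul, FcAux.b_mul1 c hc k]
      have hp2 : gc c * FcAux.bb c (k+2)
          = (-(c * c)) • (FcAux.bb c (k+3) + FcAux.bb c (k+4)) := by
        rw [FcAux.gc_eq c hc, FcAux.smul_mul, FcAux.b_mul2 c hc k]
      constructor
      · rw [hp1]
        exact Submodule.smul_mem _ _
          (Submodule.add_mem _ (FcAux.bb_memV c hc k) (FcAux.bb_memV c hc (k+1)))
      · rw [hp2]
        exact Submodule.smul_mem _ _
          (Submodule.add_mem _ (FcAux.bb_memV c hc (k+1)) (FcAux.bb_memV c hc (k+2)))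
    | zero =>
      constructor <;> (rw [mul_zero]; exact Submodule.zero_mem _)
    | add a b ha hb iha ihb =>
      exact ⟨by rw [mul_add]; exact Submodule.add_mem _ iha.1 ihb.1,
        by rw [mul_add]; exact Submodule.add_mem _ iha.2 ihb.2⟩
    | smul r a ha iha =>
      exact ⟨by rw [FcAux.mul_smul]; exact Submodule.smul_mem _ _ iha.1,
        by rw [FcAux.mul_smul]; exact Submodule.smul_mem _ _ iha.2⟩
  exact main _ (FcAux.dpow_memU c hc j)

end
end

section
/- Let c ∈ ℂ, c ≠ 0. In the Laurent polynomial ring ℂ[x, x^{−1}] set f̃ = c·(x^{−1} + 1), g̃ = −c²·(x^{−2} + x^{−1}), and let D be the derivation c·(x+1)·d/dx. Then for every integer j ≥ 0, the three elements D^j g̃, f̃·D^j g̃ and g̃·D^j g̃ all lie in x^{−1}·ℂ[x^{−1}], the span of the strictly negative powers of x. -/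
noncomputable section

open LaurentPolynomial

/-- The derivative `d/dx` on the Laurent polynomial ring `ℂ[x, x⁻¹]`:
`xⁿ ↦ n·xⁿ⁻¹`. -/
def lpDeriv (p : LaurentPolynomial ℂ) : LaurentPolynomial ℂ :=
  Finsupp.sum (AddMonoidAlgebra.coeff p) fun n a => ((n : ℂ) * a) • T (n - 1)

/-- The ℂ-subspace `x⁻¹·ℂ[x⁻¹]` of `ℂ[x, x⁻¹]` spanned by the strictly negative
powers of `x`. -/
def negPowers : Submodule ℂ (LaurentPolynomial ℂ) :=
  Submodule.span ℂ (Set.range fun m : ℕ => T (-(m + 1) : ℤ))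

lemma Tneg_mem (n : ℤ) (hn : n < 0) : (T n : LaurentPolynomial ℂ) ∈ negPowers := by
  have h : n = -(((-n - 1).toNat : ℤ) + 1) := by omega
  rw [h]
  exact Submodule.subset_span ⟨(-n - 1).toNat, rfl⟩

lemma lpDeriv_T (n : ℤ) : lpDeriv (T n) = (n : ℂ) • T (n - 1) := by
  unfold lpDeriv
  rw [show AddMonoidAlgebra.coeff (T n : LaurentPolynomial ℂ) = Finsupp.single n 1 from rfl,
    Finsupp.sum_single_index (by simp), mul_one]

lemma lpDeriv_add (p q : LaurentPolynomial ℂ) :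
    lpDeriv (p + q) = lpDeriv p + lpDeriv q := by
  unfold lpDeriv; rw [AddMonoidAlgebra.coeff_add]
  exact Finsupp.sum_add_index' (fun n => by simp) (fun n a b => by rw [mul_add, add_smul])

lemma lpDeriv_smul (r : ℂ) (p : LaurentPolynomial ℂ) :
    lpDeriv (r • p) = r • lpDeriv p := by
  unfold lpDeriv
  rw [AddMonoidAlgebra.coeff_smul, Finsupp.sum_smul_index' (fun n => by simp), Finsupp.smul_sum]
  refine Finsupp.sum_congr fun n _ => ?_
  rw [smul_eq_mul, smul_smul]
  ring_nf

lemma D_mem (c : ℂ) {p : LaurentPolynomial ℂ} (hp : p ∈ negPowers) :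
    c • ((T 1 + 1) * lpDeriv p) ∈ negPowers := by
  induction hp using Submodule.span_induction with
  | mem x hx =>
    obtain ⟨m, rfl⟩ := hx
    rw [lpDeriv_T]
    have h1 : (T 1 + 1 : LaurentPolynomial ℂ) * ((((-(m + 1) : ℤ)) : ℂ) • T ((-(m + 1) : ℤ) - 1))
        = (((-(m + 1) : ℤ)) : ℂ) • (T (-(m + 1) : ℤ) + T ((-(m + 1) : ℤ) - 1)) := by
      rw [mul_smul_comm, add_mul, one_mul, ← T_add]
      ring_nf
    rw [h1, smul_smul]
    exact Submodule.smul_mem _ _ (add_mem (Tneg_mem _ (by omega)) (Tneg_mem _ (by omega)))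
  | zero => simp [lpDeriv]
  | add x y hx hy ihx ihy => rw [lpDeriv_add, mul_add, smul_add]; exact add_mem ihx ihy
  | smul r x hx ih =>
    rw [lpDeriv_smul, mul_smul_comm, smul_comm]
    exact Submodule.smul_mem _ _ ih

lemma mulT_mem (k : ℤ) (hk : k ≤ 0) {p : LaurentPolynomial ℂ} (hp : p ∈ negPowers) :
    T k * p ∈ negPowers := by
  induction hp using Submodule.span_induction with
  | mem x hx =>
    obtain ⟨m, rfl⟩ := hx
    rw [← T_add]
    exact Tneg_mem _ (by omega)
  | zero => simp
  | add x y hx hy ihx ihy => rw [mul_add]; exact add_mem ihx ihy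
  | smul r x hx ih => rw [mul_smul_comm]; exact Submodule.smul_mem _ _ ih

/-- Let `c ≠ 0`, and in `ℂ[x, x⁻¹]` set `f̃ = c·(x⁻¹ + 1)`, `g̃ = −c²·(x⁻² + x⁻¹)`, and
let `D` be the derivation `c·(x+1)·d/dx`.  Then for every `j ≥ 0` the elements `Dʲg̃`,
`f̃·Dʲg̃` and `g̃·Dʲg̃` all lie in `x⁻¹·ℂ[x⁻¹]`. -/
theorem laurent_poly_span_closure (c : ℂ) (hc : c ≠ 0) (j : ℕ) :
    (fun p => c • ((T 1 + 1) * lpDeriv p))^[j] (-(c ^ 2) • (T (-2 : ℤ) + T (-1 : ℤ)))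
        ∈ negPowers ∧
      c • (T (-1 : ℤ) + 1) *
          (fun p => c • ((T 1 + 1) * lpDeriv p))^[j] (-(c ^ 2) • (T (-2 : ℤ) + T (-1 : ℤ)))
        ∈ negPowers ∧
      (-(c ^ 2) • (T (-2 : ℤ) + T (-1 : ℤ))) *
          (fun p => c • ((T 1 + 1) * lpDeriv p))^[j] (-(c ^ 2) • (T (-2 : ℤ) + T (-1 : ℤ)))
        ∈ negPowers := by
  have key : ∀ n : ℕ, (fun p => c • ((T 1 + 1) * lpDeriv p))^[n]
      (-(c ^ 2) • (T (-2 : ℤ) + T (-1 : ℤ))) ∈ negPowers := by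
    intro n
    induction n with
    | zero =>
      simp only [Function.iterate_zero, id]
      exact Submodule.smul_mem _ _
        (add_mem (Tneg_mem _ (by norm_num)) (Tneg_mem _ (by norm_num)))
    | succ n ih =>
      rw [Function.iterate_succ_apply']
      exact D_mem c ih
  have hqmem := key j
  refine ⟨hqmem, ?_, ?_⟩
  · rw [smul_mul_assoc, add_mul, one_mul]
    exact Submodule.smul_mem _ _ (add_mem (mulT_mem (-1) (by norm_num) hqmem) hqmem)
  · rw [smul_mul_assoc, add_mul]
    exact Submodule.smul_mem _ _
      (add_mem (mulT_mem (-2) (by norm_num) hqmem) (mulT_mem (-1) (by norm_num) hqmem))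

end
end

section
/- Let f ∈ ℂ((z)) be a formal Laurent series with f − z^{−1} ∈ ℂ[[z]] (i.e., f ∈ z^{−1} + ℂ[[z]]). Then f satisfies f(−z)·f(z) = ∂_z f(z) if and only if either f(z) = z^{−1}, or there exists c ∈ ℂ, c ≠ 0, such that f(z) = Σ_{n≥0} (−1)^n·B_n·c^n·z^{n−1}/n! (the Laurent expansion of c·e^{cz}/(e^{cz}−1)). -/
noncomputable section

noncomputable section
open PowerSeries

namespace OdeAux

def E (c : ℂ) : PowerSeries ℂ := rescale c (PowerSeries.exp ℂ)
def Psi (c : ℂ) : PowerSeries ℂ := rescale (-c) (bernoulliPowerSeries ℂ)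

lemma hE_mul (c : ℂ) : E c * E (-c) = 1 := by
  rw [E, E, PowerSeries.exp_mul_exp_eq_exp_add, add_neg_cancel, rescale_zero]
  simp

lemma hE_deriv (c : ℂ) : d⁄dX ℂ (E c) = PowerSeries.C c * E c := by
  ext n
  rw [PowerSeries.coeff_derivative]
  simp only [E, coeff_rescale, coeff_exp, PowerSeries.coeff_C_mul, eq_ratCast]
  have h1 : ((n.factorial : ℂ)) ≠ 0 := Nat.cast_ne_zero.mpr n.factorial_ne_zero
  have h3 : ((n : ℂ) * n.factorial + n.factorial) ≠ 0 := by
    have : ((n : ℂ) * n.factorial + n.factorial) = (((n+1).factorial : ℕ) : ℂ) := by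
      push_cast [Nat.factorial_succ]; ring
    rw [this]
    exact Nat.cast_ne_zero.mpr (n+1).factorial_ne_zero
  push_cast [Nat.factorial_succ]
  field_simp
  linear_combination

lemma hPsi (c : ℂ) : Psi c * (E (-c) - 1) = PowerSeries.C (-c) * X := by
  have h := congrArg (rescale (-c)) (bernoulliPowerSeries_mul_exp_sub_one ℂ)
  rw [map_mul, map_sub, map_one, rescale_X] at h
  rw [Psi, E]
  exact h

lemma hD_ne {c : ℂ} (hc : c ≠ 0) : E (-c) - 1 ≠ 0 := by
  intro h
  have := congrArg (PowerSeries.coeff 1) h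
  simp [E, coeff_rescale, coeff_exp, PowerSeries.coeff_one] at this
  exact hc (by simpa using this)

lemma hPsiE {c : ℂ} (hc : c ≠ 0) : Psi c * E (-c) = Psi (-c) := by
  have hD' : E c - 1 ≠ 0 := by simpa using hD_ne (neg_ne_zero.mpr hc)
  apply mul_right_cancel₀ hD'
  have h1 := hPsi c
  have h2 := hPsi (-c)
  have h3 := hE_mul c
  rw [neg_neg] at h2
  rw [map_neg] at h1
  linear_combination Psi c * h3 - h1 - h2

lemma hmain {c : ℂ} (hc : c ≠ 0) :
    X * d⁄dX ℂ (Psi c) - Psi c = -(Psi (-c) * Psi c) := by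
  have hD : E (-c) - 1 ≠ 0 := hD_ne hc
  apply mul_right_cancel₀ hD
  have h1 := hPsi c
  have hdD : d⁄dX ℂ (E (-c) - 1) = PowerSeries.C (-c) * E (-c) := by
    rw [map_sub, hE_deriv]; simp
  have h3 : d⁄dX ℂ (Psi c) * (E (-c) - 1) =
      PowerSeries.C (-c) - Psi c * (PowerSeries.C (-c) * E (-c)) := by
    have := congrArg (d⁄dX ℂ) h1
    rw [Derivation.leibniz, hdD, Derivation.leibniz, derivative_X, derivative_C] at this
    simp only [smul_eq_mul, mul_one, mul_zero, add_zero] at this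
    linear_combination this
  have hE := hPsiE hc
  linear_combination X * h3 + (Psi (-c) - 1) * h1 - (PowerSeries.C (-c) * X) * hE

end OdeAux

noncomputable section Part2
namespace OdeAux
open PowerSeries

def phi (c : ℂ) : PowerSeries ℂ :=
  PowerSeries.mk fun n =>
    (-1) ^ (n+1) * (bernoulli (n+1) : ℂ) * c ^ (n+1) / (((n+1).factorial : ℕ) : ℂ)

lemma Psi_eq (c : ℂ) : Psi c = 1 + X * phi c := by
  ext n
  cases n with
  | zero => simp [Psi, coeff_rescale, bernoulliPowerSeries, coeff_mk]
  | succ m =>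
    rw [map_add, PowerSeries.coeff_succ_X_mul]
    simp only [Psi, coeff_rescale, bernoulliPowerSeries, coeff_mk, phi,
      PowerSeries.coeff_one, Nat.succ_ne_zero, if_false, zero_add, eq_ratCast]
    push_cast
    ring

/-- the ODE, power series form -/
def Eqn (f : PowerSeries ℂ) : Prop :=
  rescale (-1 : ℂ) f - f = X * (d⁄dX ℂ f - rescale (-1 : ℂ) f * f)

lemma phi_sol {c : ℂ} (hc : c ≠ 0) : Eqn (phi c) := by
  have hm := hmain hc
  have hX : (X : PowerSeries ℂ) ≠ 0 := PowerSeries.X_ne_zero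
  have h1 : Psi c = 1 + X * phi c := Psi_eq c
  have h2 : Psi (-c) = 1 - X * rescale (-1 : ℂ) (phi c) := by
    have : Psi (-c) = rescale (-1 : ℂ) (Psi c) := by
      rw [Psi, Psi, PowerSeries.rescale_rescale]
      norm_num
    rw [this, h1, map_add, map_mul, map_one, rescale_X, map_neg, map_one]
    ring
  have h3 : d⁄dX ℂ (Psi c) = phi c + X * d⁄dX ℂ (phi c) := by
    rw [h1, map_add, Derivation.leibniz, derivative_X]
    simp [smul_eq_mul]
    ring
  rw [h3, h1, h2] at hm
  unfold Eqn
  apply mul_left_cancel₀ hX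
  linear_combination -hm

lemma zero_sol : Eqn 0 := by simp [Eqn]

lemma coeff_zero_phi (c : ℂ) : PowerSeries.coeff 0 (phi c) = c / 2 := by
  simp [phi, bernoulli_one]
  ring

lemma key_rec (ψ : PowerSeries ℂ) (h : Eqn ψ) (n : ℕ) :
    ((n : ℂ) + 2 - (-1) ^ (n+1)) * PowerSeries.coeff (n+1) ψ =
      ∑ p ∈ Finset.HasAntidiagonal.antidiagonal n,
        (-1) ^ p.1 * PowerSeries.coeff p.1 ψ * PowerSeries.coeff p.2 ψ := by
  have h' := congrArg (PowerSeries.coeff (n+1)) h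
  rw [map_sub, PowerSeries.coeff_succ_X_mul, map_sub, PowerSeries.coeff_derivative,
    PowerSeries.coeff_mul, coeff_rescale] at h'
  have hs : ∑ p ∈ Finset.HasAntidiagonal.antidiagonal n,
      PowerSeries.coeff p.1 (rescale (-1 : ℂ) ψ) * PowerSeries.coeff p.2 ψ =
      ∑ p ∈ Finset.HasAntidiagonal.antidiagonal n,
        (-1) ^ p.1 * PowerSeries.coeff p.1 ψ * PowerSeries.coeff p.2 ψ := by
    refine Finset.sum_congr rfl fun p _ => ?_
    rw [coeff_rescale]
  rw [hs] at h'
  linear_combination -h'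

lemma coeff_ne (m : ℕ) : ((m : ℂ) + 2 - (-1) ^ (m+1)) ≠ 0 := by
  rcases Nat.even_or_odd m with h | h
  · rw [h.add_one.neg_one_pow]
    have : ((m : ℂ) + 2 - (-1)) = ((m + 3 : ℕ) : ℂ) := by push_cast; ring
    rw [this]
    exact Nat.cast_ne_zero.mpr (by omega)
  · rw [h.add_one.neg_one_pow]
    have : ((m : ℂ) + 2 - 1) = ((m + 1 : ℕ) : ℂ) := by push_cast; ring
    rw [this]
    exact Nat.cast_ne_zero.mpr (by omega)

lemma sol_unique (f g : PowerSeries ℂ) (hf : Eqn f) (hg : Eqn g)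
    (h0 : PowerSeries.coeff 0 f = PowerSeries.coeff 0 g) : f = g := by
  ext n
  induction n using Nat.strong_induction_on with
  | _ n ih =>
    match n with
    | 0 => exact h0
    | Nat.succ m =>
      apply mul_left_cancel₀ (coeff_ne m)
      rw [key_rec f hf m, key_rec g hg m]
      refine Finset.sum_congr rfl fun p hp => ?_
      rw [Finset.HasAntidiagonal.mem_antidiagonal] at hp
      rw [ih p.1 (by omega), ih p.2 (by omega)]

end OdeAux
end Part2
noncomputable section Part3
namespace OdeAux
open HahnSeries PowerSeries

lemma negSub_coeff (f : LaurentSeries ℂ) (n : ℤ) :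
    (negSub f).coeff n = (-1 : ℂ) ^ n * f.coeff n := rfl

lemma lderiv_coeff (f : LaurentSeries ℂ) (n : ℤ) :
    (lderiv f).coeff n = ((n + 1 : ℤ) : ℂ) * f.coeff (n + 1) := rfl

lemma coe_coeff_neg (f : PowerSeries ℂ) (n : ℤ) (hn : n < 0) :
    ((f : LaurentSeries ℂ)).coeff n = 0 := by
  rw [show ((f : LaurentSeries ℂ)) = ofPowerSeries ℤ ℂ f from rfl, ofPowerSeries_apply]
  apply embDomain_notin_range
  rintro ⟨m, hm⟩
  simp at hm
  omega

lemma negSub_coe (f : PowerSeries ℂ) :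
    negSub (f : LaurentSeries ℂ) = ((rescale (-1 : ℂ) f : PowerSeries ℂ) : LaurentSeries ℂ) := by
  ext n
  rw [negSub_coeff]
  rcases n with m | m
  · rw [show (Int.ofNat m) = ((m : ℕ) : ℤ) from rfl, LaurentSeries.coeff_coe_powerSeries,
      LaurentSeries.coeff_coe_powerSeries, coeff_rescale, zpow_natCast]
  · rw [coe_coeff_neg f _ (Int.negSucc_lt_zero m), coe_coeff_neg _ _ (Int.negSucc_lt_zero m),
      mul_zero]

lemma negSub_add (f g : LaurentSeries ℂ) : negSub (f + g) = negSub f + negSub g := by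
  ext n
  simp [negSub_coeff, mul_add]

lemma negSub_single : negSub (single (-1 : ℤ) (1 : ℂ)) = -single (-1 : ℤ) (1 : ℂ) := by
  ext n
  rw [negSub_coeff]
  by_cases h : n = (-1 : ℤ)
  · subst h; simp [inv_neg_one]
  · simp [HahnSeries.coeff_single, h]

lemma lderiv_add (f g : LaurentSeries ℂ) : lderiv (f + g) = lderiv f + lderiv g := by
  ext n
  simp [lderiv_coeff, mul_add]

lemma lderiv_single : lderiv (single (-1 : ℤ) (1 : ℂ)) = single (-2 : ℤ) (-1 : ℂ) := by
  ext n
  rw [lderiv_coeff]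
  by_cases h : n = (-2 : ℤ)
  · subst h; norm_num
  · rw [HahnSeries.coeff_single_of_ne h, HahnSeries.coeff_single_of_ne (by omega), mul_zero]

lemma lderiv_coe (f : PowerSeries ℂ) :
    lderiv (f : LaurentSeries ℂ) = ((d⁄dX ℂ f : PowerSeries ℂ) : LaurentSeries ℂ) := by
  ext n
  rw [lderiv_coeff]
  rcases n with m | m
  · rw [show (Int.ofNat m + 1 : ℤ) = ((m + 1 : ℕ) : ℤ) by simp,
      show (Int.ofNat m) = ((m : ℕ) : ℤ) from rfl,
      LaurentSeries.coeff_coe_powerSeries, LaurentSeries.coeff_coe_powerSeries,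
      PowerSeries.coeff_derivative]
    push_cast
    ring
  · rw [coe_coeff_neg _ _ (Int.negSucc_lt_zero m)]
    cases m with
    | zero => norm_num
    | succ k =>
      rw [show (Int.negSucc (k + 1) + 1 : ℤ) = Int.negSucc k by rw [Int.negSucc_eq, Int.negSucc_eq]; push_cast; ring,
        coe_coeff_neg _ _ (Int.negSucc_lt_zero k), mul_zero]

lemma hXs : ((PowerSeries.X : PowerSeries ℂ) : LaurentSeries ℂ) * single (-1 : ℤ) (1 : ℂ) = 1 := by
  rw [show ((PowerSeries.X : PowerSeries ℂ) : LaurentSeries ℂ)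
      = ofPowerSeries ℤ ℂ PowerSeries.X from rfl, ofPowerSeries_X, single_mul_single]
  norm_num [HahnSeries.single_zero_one]

lemma hXX : ((PowerSeries.X : PowerSeries ℂ) : LaurentSeries ℂ)
      * ((PowerSeries.X : PowerSeries ℂ) : LaurentSeries ℂ)
      * single (-2 : ℤ) (-1 : ℂ) = -1 := by
  rw [show ((PowerSeries.X : PowerSeries ℂ) : LaurentSeries ℂ)
      = ofPowerSeries ℤ ℂ PowerSeries.X from rfl, ofPowerSeries_X, single_mul_single,
    single_mul_single]
  norm_num

end OdeAux
end Part3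
noncomputable section Part4
namespace OdeAux
open HahnSeries PowerSeries

lemma XL_ne : ((PowerSeries.X : PowerSeries ℂ) : LaurentSeries ℂ) ≠ 0 := by
  intro h
  rw [← PowerSeries.coe_zero] at h
  exact PowerSeries.X_ne_zero (ofPowerSeries_injective h)

lemma laurent_iff (φ : PowerSeries ℂ) :
    negSub (single (-1 : ℤ) (1 : ℂ) + (φ : LaurentSeries ℂ)) *
        (single (-1 : ℤ) (1 : ℂ) + (φ : LaurentSeries ℂ))
      = lderiv (single (-1 : ℤ) (1 : ℂ) + (φ : LaurentSeries ℂ)) ↔ Eqn φ := by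
  have h1 : negSub (single (-1 : ℤ) (1 : ℂ) + (φ : LaurentSeries ℂ))
      = -single (-1 : ℤ) (1 : ℂ) + ((rescale (-1 : ℂ) φ : PowerSeries ℂ) : LaurentSeries ℂ) := by
    rw [negSub_add, negSub_single, negSub_coe]
  have h2 : lderiv (single (-1 : ℤ) (1 : ℂ) + (φ : LaurentSeries ℂ))
      = single (-2 : ℤ) (-1 : ℂ) + ((d⁄dX ℂ φ : PowerSeries ℂ) : LaurentSeries ℂ) := by
    rw [lderiv_add, lderiv_single, lderiv_coe]
  rw [h1, h2]
  set XLl := ((PowerSeries.X : PowerSeries ℂ) : LaurentSeries ℂ) with hXL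
  have hXX0 : XLl * XLl ≠ 0 := mul_ne_zero XL_ne XL_ne
  rw [← mul_right_inj' hXX0]
  have hXs' := hXs
  rw [← hXL] at hXs'
  have e1 : XLl * XLl * ((-single (-1 : ℤ) (1 : ℂ)
        + ((rescale (-1 : ℂ) φ : PowerSeries ℂ) : LaurentSeries ℂ)) *
        (single (-1 : ℤ) (1 : ℂ) + (φ : LaurentSeries ℂ)))
      = (((PowerSeries.X * rescale (-1 : ℂ) φ - 1) * (1 + PowerSeries.X * φ) :
          PowerSeries ℂ) : LaurentSeries ℂ) := by
    push_cast
    rw [← hXL]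
    linear_combination (-(XLl * single (-1:ℤ) (1:ℂ)) - 1 - XLl * (φ : LaurentSeries ℂ)
      + XLl * ((rescale (-1 : ℂ) φ : PowerSeries ℂ) : LaurentSeries ℂ)) * hXs'
  have e2 : XLl * XLl * (single (-2 : ℤ) (-1 : ℂ)
        + ((d⁄dX ℂ φ : PowerSeries ℂ) : LaurentSeries ℂ))
      = (((PowerSeries.X * (PowerSeries.X * d⁄dX ℂ φ) - 1) :
          PowerSeries ℂ) : LaurentSeries ℂ) := by
    have := hXX
    rw [← hXL] at this
    push_cast
    rw [← hXL]
    linear_combination this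
  rw [e1, e2]
  rw [Function.Injective.eq_iff ofPowerSeries_injective]
  unfold Eqn
  constructor
  · intro h
    apply mul_left_cancel₀ (PowerSeries.X_ne_zero (R := ℂ))
    linear_combination h
  · intro h
    linear_combination PowerSeries.X * h

lemma fc_eq (c : ℂ) :
    fc c = single (-1 : ℤ) (1 : ℂ) + ((phi c : PowerSeries ℂ) : LaurentSeries ℂ) := by
  have hmk : (PowerSeries.mk fun n =>
      (-1) ^ n * (bernoulli n : ℂ) * c ^ n / (n.factorial : ℂ)) = Psi c := by
    ext n
    simp only [PowerSeries.coeff_mk, Psi, coeff_rescale, bernoulliPowerSeries,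
      eq_ratCast]
    push_cast
    ring
  rw [fc, hmk, Psi_eq]
  push_cast
  linear_combination ((phi c : PowerSeries ℂ) : LaurentSeries ℂ) * hXs

end OdeAux
end Part4
/-- Let `f ∈ ℂ((z))` with `f − z⁻¹ ∈ ℂ[[z]]`.  Then `f(−z)·f(z) = ∂_z f(z)` if and only
if either `f = z⁻¹` or `f = f_c` for some `c ≠ 0`. -/
theorem ode_solutions (f : LaurentSeries ℂ)
    (hf : ∃ φ : PowerSeries ℂ, f = HahnSeries.single (-1 : ℤ) (1 : ℂ) + (φ : LaurentSeries ℂ)) :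
    negSub f * f = lderiv f ↔
      f = HahnSeries.single (-1 : ℤ) (1 : ℂ) ∨ ∃ c : ℂ, c ≠ 0 ∧ f = fc c := by
  obtain ⟨φ, rfl⟩ := hf
  rw [OdeAux.laurent_iff φ]
  constructor
  · intro h
    by_cases hc : PowerSeries.coeff 0 φ = 0
    · left
      have hφ : φ = 0 := OdeAux.sol_unique φ 0 h OdeAux.zero_sol (by simpa using hc)
      rw [hφ, PowerSeries.coe_zero, add_zero]
    · right
      refine ⟨2 * PowerSeries.coeff 0 φ, by simpa using hc, ?_⟩
      have hφ : φ = OdeAux.phi (2 * PowerSeries.coeff 0 φ) := by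
        apply OdeAux.sol_unique φ _ h (OdeAux.phi_sol (by simpa using hc))
        rw [OdeAux.coeff_zero_phi]
        ring
      rw [OdeAux.fc_eq, ← hφ]
  · rintro (h | ⟨c, hc, h⟩)
    · have h0 : (φ : LaurentSeries ℂ) = ((0 : PowerSeries ℂ) : LaurentSeries ℂ) := by
        rw [PowerSeries.coe_zero]; linear_combination h
      have hφ0 : φ = 0 := HahnSeries.ofPowerSeries_injective h0
      rw [hφ0]; exact OdeAux.zero_sol
    · rw [OdeAux.fc_eq] at h
      have hφ : φ = OdeAux.phi c := HahnSeries.ofPowerSeries_injective (add_left_cancel h)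
      rw [hφ]; exact OdeAux.phi_sol hc

end

end
end

section
/- Let f ∈ ℂ((z)) be a formal Laurent series satisfying f(−z)·f(z) = ∂_z f(z). Then there exist c ∈ ℂ and an odd series F ∈ ℂ((z)) (i.e., F(−z) = −F(z)) such that f = c/2 + F and ∂_z F = c²/4 − F². -/
noncomputable section

lemma negSub_coeff (f : LaurentSeries ℂ) (n : ℤ) :
    (negSub f).coeff n = (-1 : ℂ) ^ n * f.coeff n := rfl

lemma lderiv_coeff (f : LaurentSeries ℂ) (n : ℤ) :
    (lderiv f).coeff n = ((n + 1 : ℤ) : ℂ) * f.coeff (n + 1) := rfl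

lemma negSub_support (f : LaurentSeries ℂ) : (negSub f).support = f.support := by
  ext n
  simp [HahnSeries.mem_support, negSub_coeff, zpow_ne_zero]

lemma negSub_mul (a b : LaurentSeries ℂ) : negSub (a * b) = negSub a * negSub b := by
  ext n
  have hanti : Finset.antidiagonal (negSub a).isPWO_support (negSub b).isPWO_support n
      = Finset.antidiagonal a.isPWO_support b.isPWO_support n := by
    ext ij
    simp [Finset.mem_addAntidiagonal, negSub_support]
  rw [negSub_coeff, HahnSeries.coeff_mul, HahnSeries.coeff_mul, hanti, Finset.mul_sum]
  refine Finset.sum_congr rfl fun ij hij => ?_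
  rw [Finset.mem_addAntidiagonal] at hij
  rw [negSub_coeff, negSub_coeff, ← hij.2.2, zpow_add₀ (by norm_num : (-1:ℂ) ≠ 0)]
  ring

lemma negSub_add (a b : LaurentSeries ℂ) : negSub (a + b) = negSub a + negSub b := by
  ext n; simp [negSub_coeff, mul_add]

lemma negSub_neg (a : LaurentSeries ℂ) : negSub (-a) = -negSub a := by
  ext n; simp [negSub_coeff]

lemma negSub_negSub (a : LaurentSeries ℂ) : negSub (negSub a) = a := by
  ext n
  rw [negSub_coeff, negSub_coeff, ← mul_assoc, ← mul_zpow]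
  norm_num

lemma negSub_smul (c : ℂ) (a : LaurentSeries ℂ) : negSub (c • a) = c • negSub a := by
  ext n; simp [negSub_coeff]; ring

lemma lderiv_add (a b : LaurentSeries ℂ) : lderiv (a + b) = lderiv a + lderiv b := by
  ext n; simp [lderiv_coeff, mul_add]

lemma lderiv_smul (c : ℂ) (a : LaurentSeries ℂ) : lderiv (c • a) = c • lderiv a := by
  ext n; simp [lderiv_coeff]; ring

lemma negSub_lderiv (f : LaurentSeries ℂ) : negSub (lderiv f) = -lderiv (negSub f) := by
  ext n
  rw [negSub_coeff, lderiv_coeff, HahnSeries.coeff_neg, lderiv_coeff, negSub_coeff,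
    zpow_add₀ (by norm_num : (-1:ℂ) ≠ 0)]
  ring

lemma negSub_C (a : ℂ) : negSub (HahnSeries.C a) = HahnSeries.C a := by
  ext n
  rw [negSub_coeff]
  rcases eq_or_ne n 0 with h | h
  · simp [h]
  · simp [HahnSeries.C_apply, HahnSeries.coeff_single_of_ne h]

lemma lderiv_C (a : ℂ) : lderiv (HahnSeries.C a) = 0 := by
  ext n
  rw [lderiv_coeff]
  rcases eq_or_ne (n + 1) 0 with h | h
  · simp [h]
  · simp [HahnSeries.C_apply, HahnSeries.coeff_single_of_ne h]

lemma eq_C_of_lderiv_eq_zero (f : LaurentSeries ℂ) (h : lderiv f = 0) :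
    f = HahnSeries.C (f.coeff 0) := by
  ext n
  rcases eq_or_ne n 0 with h0 | h0
  · simp [h0, HahnSeries.C_apply]
  · have := congrArg (fun g : LaurentSeries ℂ => g.coeff (n - 1)) h
    simp only [lderiv_coeff, HahnSeries.coeff_zero, sub_add_cancel] at this
    rcases mul_eq_zero.1 this with hc | hc
    · exact absurd (by exact_mod_cast hc) h0
    · simp [HahnSeries.C_apply, HahnSeries.coeff_single_of_ne h0, hc]

/-- If `f ∈ ℂ((z))` satisfies `f(−z)·f(z) = ∂_z f(z)` then `f = c/2 + F` for some
constant `c ∈ ℂ` and some odd series `F` (i.e. `F(−z) = −F(z)`) with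
`∂_z F = c²/4 − F²`. -/
theorem ode_decomposition (f : LaurentSeries ℂ) (hf : negSub f * f = lderiv f) :
    ∃ (c : ℂ) (F : LaurentSeries ℂ), negSub F = -F ∧
      f = HahnSeries.C (c / 2) + F ∧
      lderiv F = HahnSeries.C (c ^ 2 / 4) - F ^ 2 := by
  set E : LaurentSeries ℂ := (2⁻¹ : ℂ) • (f + negSub f) with hE
  set F : LaurentSeries ℂ := (2⁻¹ : ℂ) • (f - negSub f) with hF
  have hEF : f = E + F := by
    rw [hE, hF]; module
  have hnegf : negSub f = E - F := by
    rw [hE, hF]; module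
  have hnegE : negSub E = E := by
    rw [hE, negSub_smul, negSub_add, negSub_negSub, add_comm]
  have hnegF : negSub F = -F := by
    have h1 : negSub F = (2⁻¹ : ℂ) • (negSub f - f) := by
      rw [hF, negSub_smul, sub_eq_add_neg, negSub_add, negSub_neg, negSub_negSub,
        ← sub_eq_add_neg]
    rw [h1, hF]; module
  -- main equation: E^2 - F^2 = lderiv E + lderiv F
  have key : E * E - F * F = lderiv E + lderiv F := by
    rw [← lderiv_add, ← hEF, ← hf, hnegf, hEF]
    ring
  -- apply negSub
  have lneg : lderiv (-F) = -lderiv F := by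
    ext n; simp only [lderiv_coeff, HahnSeries.coeff_neg]; ring
  have key2 : E * E - F * F = -lderiv E + lderiv F := by
    have h := congrArg negSub key
    rw [sub_eq_add_neg, negSub_add, negSub_neg, negSub_mul, negSub_mul, hnegE, hnegF,
      negSub_add, negSub_lderiv, negSub_lderiv, hnegE, hnegF, lneg] at h
    linear_combination h
  have hdE : lderiv E = 0 := by
    have h' : lderiv E + lderiv E = 0 := by
      have h3 := key.symm.trans key2
      linear_combination h3
    ext n
    have h2 := congrArg (fun g : LaurentSeries ℂ => g.coeff n) h'
    simp only [HahnSeries.coeff_add, HahnSeries.coeff_zero] at h2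
    rw [HahnSeries.coeff_zero]
    linear_combination h2 / 2
  obtain ⟨a, hEa⟩ : ∃ a, E = HahnSeries.C a := ⟨E.coeff 0, eq_C_of_lderiv_eq_zero E hdE⟩
  refine ⟨2 * a, F, hnegF, ?_, ?_⟩
  · rw [hEF, hEa]
    norm_num
  · have hdF : lderiv F = E * E - F * F := by
      rw [key2, hdE]; ring
    rw [hdF, hEa, ← map_mul]
    have : a * a = (2 * a) ^ 2 / 4 := by ring
    rw [this, sq F]

end
end
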